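/- Let d ≥ 1 and let I : C²_b(ℝ^d) → C_b(ℝ^d) be Lipschitz with constant K₀ and satisfy the global comparison property. Then for every R > 0 there is a constant C = C(R,d) such that for all u, v ∈ C²_b(ℝ^d): sup_{|x| ≤ R} | I(u)(x) − I(v)(x) | ≤ C · K₀ · ( ‖u − v‖_{C²(B̄_{R+1})} + sup_{|y| ≥ R} |u(y) − v(y)| ), where ‖w‖_{C²(B̄_{R+1})} denotes the C² norm with all suprema restricted to the closed ball of radius R+1 centered at the origin. -/

import Mathlib

open Metric Set

noncomputable section

abbrev Euc (d : ℕ) := EuclideanSpace ℝ (Fin d)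

variable {d : ℕ}

def supNorm (u : Euc d → ℝ) : ℝ := ⨆ x, |u x|

def gradSup (u : Euc d → ℝ) : ℝ := ⨆ x, ‖fderiv ℝ u x‖

def hessSup (u : Euc d → ℝ) : ℝ := ⨆ x, ‖iteratedFDeriv ℝ 2 u x‖

def C2Norm (u : Euc d → ℝ) : ℝ := supNorm u + gradSup u + hessSup u

def IsC2b (u : Euc d → ℝ) : Prop :=
  ContDiff ℝ 2 u ∧ ∃ M : ℝ, ∀ x, |u x| ≤ M ∧ ‖fderiv ℝ u x‖ ≤ M ∧ ‖iteratedFDeriv ℝ 2 u x‖ ≤ M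

def IsCb (f : Euc d → ℝ) : Prop := Continuous f ∧ ∃ M : ℝ, ∀ x, |f x| ≤ M

def GCP (dom : (Euc d → ℝ) → Prop) (I : (Euc d → ℝ) → Euc d → ℝ) : Prop :=
  ∀ u v, dom u → dom v → (∀ y, u y ≤ v y) → ∀ x, u x = v x → I u x ≤ I v x

def LipWith (K₀ : ℝ) (dom : (Euc d → ℝ) → Prop) (N : (Euc d → ℝ) → ℝ)
    (I : (Euc d → ℝ) → Euc d → ℝ) : Prop :=
  ∀ u v, dom u → dom v → ∀ x, |I u x - I v x| ≤ K₀ * N (fun y => u y - v y)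

def localSup (r : ℝ) (u : Euc d → ℝ) : ℝ := ⨆ x ∈ closedBall (0 : Euc d) r, |u x|

def localGradSup (r : ℝ) (u : Euc d → ℝ) : ℝ :=
  ⨆ x ∈ closedBall (0 : Euc d) r, ‖fderiv ℝ u x‖

def localHessSup (r : ℝ) (u : Euc d → ℝ) : ℝ :=
  ⨆ x ∈ closedBall (0 : Euc d) r, ‖iteratedFDeriv ℝ 2 u x‖

def localC2Norm (r : ℝ) (u : Euc d → ℝ) : ℝ := localSup r u + localGradSup r u + localHessSup r u

set_option maxHeartbeats 1000000


lemma norm_iFD_one (f : Euc d → ℝ) (x : Euc d) :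
    ‖iteratedFDeriv ℝ 1 f x‖ = ‖fderiv ℝ f x‖ := by
  have h := norm_iteratedFDeriv_fderiv (𝕜 := ℝ) (f := f) (x := x) (n := 0)
  simp only [norm_iteratedFDeriv_zero, zero_add] at h
  exact h.symm

lemma le_biSup_aux {S : Set (Euc d)} (f : Euc d → ℝ) {M : ℝ}
    (hM : ∀ x, f x ≤ M) {y : Euc d} (hy : y ∈ S) :
    f y ≤ ⨆ x ∈ S, f x := by
  have hb : ∀ x : Euc d, (⨆ _ : x ∈ S, f x) ≤ max M 0 := by
    intro x
    by_cases h : x ∈ S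
    · rw [ciSup_pos h]; exact le_max_of_le_left (hM x)
    · haveI : IsEmpty (x ∈ S) := ⟨h⟩
      rw [Real.iSup_of_isEmpty]; exact le_max_right _ _
  calc f y = ⨆ _ : y ∈ S, f y := (ciSup_pos (f := fun _ => f y) hy).symm
    _ ≤ ⨆ x ∈ S, f x :=
        le_ciSup ⟨max M 0, by rintro z ⟨x, rfl⟩; exact hb x⟩ y

/-- near/far splitting estimate for operators with the GCP:
`sup_{|x| ≤ R} |I(u)(x) - I(v)(x)|
  ≤ C K₀ ( ‖u-v‖_{C²(B̄_{R+1})} + sup_{|y| ≥ R} |u(y) - v(y)| )`,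
with `C` depending only on `R` and `d`. -/
theorem near_far_estimate (d : ℕ) (hd : 1 ≤ d) (K₀ : ℝ) (hK₀ : 0 ≤ K₀)
    (R : ℝ) (hR : 0 < R) :
    ∃ C : ℝ, 0 < C ∧
      ∀ I : (Euc d → ℝ) → Euc d → ℝ,
        (∀ u, IsC2b u → IsCb (I u)) →
        LipWith K₀ IsC2b C2Norm I →
        GCP IsC2b I →
        ∀ u v, IsC2b u → IsC2b v → ∀ x : Euc d, ‖x‖ ≤ R →
          |I u x - I v x| ≤
            C * K₀ * (localC2Norm (R + 1) (fun y => u y - v y)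
              + ⨆ y ∈ {y : Euc d | R ≤ ‖y‖}, |u y - v y|) := by
  classical
  -- the bump function
  set φb : ContDiffBump (0 : Euc d) := ⟨R, R + 1, hR, by linarith⟩ with hφbdef
  have hφsm : ContDiff ℝ 2 (⇑φb) := φb.contDiff
  have hc1 : Continuous (iteratedFDeriv ℝ 1 (⇑φb)) := hφsm.continuous_iteratedFDeriv (by norm_num)
  have hc2 : Continuous (iteratedFDeriv ℝ 2 (⇑φb)) := hφsm.continuous_iteratedFDeriv (by norm_num)
  obtain ⟨M1, hM1⟩ := hc1.bounded_above_of_compact_support (φb.hasCompactSupport.iteratedFDeriv 1)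
  obtain ⟨M2, hM2⟩ := hc2.bounded_above_of_compact_support (φb.hasCompactSupport.iteratedFDeriv 2)
  set Mφ : ℝ := max (max M1 M2) 1 with hMφdef
  have hMφ1 : (1 : ℝ) ≤ Mφ := le_max_right _ _
  have hφD1 : ∀ y, ‖iteratedFDeriv ℝ 1 (⇑φb) y‖ ≤ Mφ := fun y =>
    (hM1 y).trans ((le_max_left _ _).trans (le_max_left _ _))
  have hφD2 : ∀ y, ‖iteratedFDeriv ℝ 2 (⇑φb) y‖ ≤ Mφ := fun y =>
    (hM2 y).trans ((le_max_right _ _).trans (le_max_left _ _))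
  refine ⟨3 * (1 + 3 * Mφ), by nlinarith, ?_⟩
  intro I hIdom hLip hGCP u v hu hv x hx
  obtain ⟨Mu, hMu⟩ := hu.2
  obtain ⟨Mv, hMv⟩ := hv.2
  have hdu : Differentiable ℝ u := hu.1.differentiable (by norm_num)
  have hdv : Differentiable ℝ v := hv.1.differentiable (by norm_num)
  have hCw : ContDiff ℝ 2 (fun y => u y - v y) := hu.1.sub hv.1
  have hdw : Differentiable ℝ (fun y => u y - v y) := hCw.differentiable (by norm_num)
  -- global bounds on w = u - v
  have hw0 : ∀ y : Euc d, |u y - v y| ≤ Mu + Mv := fun y =>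
    (abs_sub _ _).trans (add_le_add (hMu y).1 (hMv y).1)
  have hwf : ∀ y : Euc d, ‖fderiv ℝ (fun y => u y - v y) y‖ ≤ Mu + Mv := by
    intro y
    rw [fderiv_fun_sub (hdu y) (hdv y)]
    exact (norm_sub_le _ _).trans (add_le_add (hMu y).2.1 (hMv y).2.1)
  have hwh : ∀ y : Euc d, ‖iteratedFDeriv ℝ 2 (fun y => u y - v y) y‖ ≤ Mu + Mv := by
    intro y
    have h1 : (fun y => u y - v y) = fun y => u y + (-1 : ℝ) • v y := by
      funext z; simp [sub_eq_add_neg]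
    rw [h1, iteratedFDeriv_add_apply' hu.1.contDiffAt (hv.1.const_smul (-1 : ℝ)).contDiffAt,
      iteratedFDeriv_const_smul_apply' hv.1.contDiffAt]
    refine (norm_add_le _ _).trans ?_
    rw [norm_smul, norm_neg, norm_one, one_mul]
    exact add_le_add (hMu y).2.2 (hMv y).2.2
  -- local C² norm facts
  set A : ℝ := localC2Norm (R + 1) (fun y => u y - v y) with hAdef
  set B : ℝ := ⨆ y ∈ {y : Euc d | R ≤ ‖y‖}, |u y - v y| with hBdef
  have hmemball : ∀ y : Euc d, y ∈ closedBall (0 : Euc d) (R + 1) ↔ ‖y‖ ≤ R + 1 := by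
    intro y; rw [mem_closedBall, dist_zero_right]
  have h0mem : (0 : Euc d) ∈ closedBall (0 : Euc d) (R + 1) :=
    mem_closedBall_self (by linarith)
  have hL1 : ∀ y ∈ closedBall (0 : Euc d) (R + 1),
      |u y - v y| ≤ localSup (R + 1) (fun y => u y - v y) := fun y hy =>
    le_biSup_aux (fun z => |u z - v z|) hw0 hy
  have hL2 : ∀ y ∈ closedBall (0 : Euc d) (R + 1),
      ‖fderiv ℝ (fun y => u y - v y) y‖ ≤ localGradSup (R + 1) (fun y => u y - v y) := fun y hy =>
    le_biSup_aux (fun z => ‖fderiv ℝ (fun y => u y - v y) z‖) hwf hy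
  have hL3 : ∀ y ∈ closedBall (0 : Euc d) (R + 1),
      ‖iteratedFDeriv ℝ 2 (fun y => u y - v y) y‖
        ≤ localHessSup (R + 1) (fun y => u y - v y) := fun y hy =>
    le_biSup_aux (fun z => ‖iteratedFDeriv ℝ 2 (fun y => u y - v y) z‖) hwh hy
  have hL1n : 0 ≤ localSup (R + 1) (fun y => u y - v y) :=
    le_trans (abs_nonneg _) (hL1 0 h0mem)
  have hL2n : 0 ≤ localGradSup (R + 1) (fun y => u y - v y) :=
    le_trans (norm_nonneg _) (hL2 0 h0mem)
  have hL3n : 0 ≤ localHessSup (R + 1) (fun y => u y - v y) :=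
    le_trans (norm_nonneg _) (hL3 0 h0mem)
  have hA0 : 0 ≤ A := by rw [hAdef]; unfold localC2Norm; linarith
  have hAS : ∀ y : Euc d, ‖y‖ ≤ R + 1 →
      |u y - v y| ≤ A ∧ ‖fderiv ℝ (fun y => u y - v y) y‖ ≤ A ∧
        ‖iteratedFDeriv ℝ 2 (fun y => u y - v y) y‖ ≤ A := by
    intro y hy
    have hyb : y ∈ closedBall (0 : Euc d) (R + 1) := (hmemball y).2 hy
    rw [hAdef]; unfold localC2Norm
    exact ⟨by linarith [hL1 y hyb], by linarith [hL2 y hyb], by linarith [hL3 y hyb]⟩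
  -- far-field sup facts
  have hBmem : ∀ y : Euc d, R ≤ ‖y‖ → |u y - v y| ≤ B := fun y hy =>
    le_biSup_aux (fun z => |u z - v z|) hw0 (by exact hy)
  have hB0 : 0 ≤ B := by
    have h1 : ‖(EuclideanSpace.single (⟨0, hd⟩ : Fin d) R : Euc d)‖ = R := by
      rw [EuclideanSpace.norm_single, Real.norm_eq_abs, abs_of_pos hR]
    exact le_trans (abs_nonneg _) (hBmem _ (le_of_eq h1.symm))
  -- bump function facts
  have hφone : ∀ y : Euc d, ‖y‖ ≤ R → φb y = 1 := by
    intro y hy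
    exact φb.one_of_mem_closedBall (by rw [mem_closedBall, dist_zero_right]; exact hy)
  have hφzero : ∀ y : Euc d, ¬(‖y‖ ≤ R + 1) → φb y = 0 := by
    intro y hy
    refine image_eq_zero_of_notMem_tsupport ?_
    rw [φb.tsupport_eq, mem_closedBall, dist_zero_right]; exact hy
  have hφDzero : ∀ n : ℕ, ∀ y : Euc d, ¬(‖y‖ ≤ R + 1) → iteratedFDeriv ℝ n (⇑φb) y = 0 := by
    intro n y hy
    by_contra h
    have := support_iteratedFDeriv_subset (𝕜 := ℝ) (f := ⇑φb) n (by simpa using h)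
    rw [φb.tsupport_eq, mem_closedBall, dist_zero_right] at this
    exact hy this
  have hgD : ∀ y : Euc d,
      ‖fderiv ℝ (fun y => φb y * (u y - v y)) y‖ ≤ (1 + 3 * Mφ) * A ∧
      ‖iteratedFDeriv ℝ 2 (fun y => φb y * (u y - v y)) y‖ ≤ (1 + 3 * Mφ) * A := by
    intro y
    have h1 := norm_iteratedFDeriv_mul_le (𝕜 := ℝ) (N := (2:ℕ)) hφsm hCw y (n := 1) (by norm_num)
    have h2 := norm_iteratedFDeriv_mul_le (𝕜 := ℝ) (N := (2:ℕ)) hφsm hCw y (n := 2) (by norm_num)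
    simp only [Finset.sum_range_succ, Finset.sum_range_zero, zero_add,
      show (1:ℕ)-0 = 1 from rfl, show (1:ℕ)-1 = 0 from rfl, show (2:ℕ)-0 = 2 from rfl,
      show (2:ℕ)-1 = 1 from rfl, show (2:ℕ)-2 = 0 from rfl,
      norm_iteratedFDeriv_zero, Real.norm_eq_abs, norm_iFD_one] at h1 h2
    simp only [Nat.reduceSub, norm_iteratedFDeriv_zero, Real.norm_eq_abs, norm_iFD_one] at h1 h2
    norm_num at h1 h2
    -- h1 : ‖iFD1 g y‖ ≤ |φ y| * ‖fderiv w y‖ + ‖fderiv φ y‖ * |w y|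
    -- h2 : ‖iFD2 g y‖ ≤ |φ y| * ‖iFD2 w y‖ + 2 * ‖fderiv φ y‖ * ‖fderiv w y‖ + ‖iFD2 φ y‖ * |w y|
    have hφf : ∀ z : Euc d, ‖fderiv ℝ (⇑φb) z‖ ≤ Mφ := fun z => by
      rw [← norm_iFD_one]; exact hφD1 z
    have hMφ0 : (0:ℝ) ≤ Mφ := by linarith
    by_cases hy : ‖y‖ ≤ R + 1
    · obtain ⟨ha0, ha1, ha2⟩ := hAS y hy
      have hb1 : |(φb y : ℝ)| ≤ 1 := by
        rw [abs_of_nonneg φb.nonneg]; exact φb.le_one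
      have t1 : |(φb y : ℝ)| * ‖fderiv ℝ (fun y => u y - v y) y‖ ≤ 1 * A :=
        mul_le_mul hb1 ha1 (norm_nonneg _) zero_le_one
      have t2 : ‖fderiv ℝ (⇑φb) y‖ * |u y - v y| ≤ Mφ * A :=
        mul_le_mul (hφf y) ha0 (abs_nonneg _) hMφ0
      have t3 : |(φb y : ℝ)| * ‖iteratedFDeriv ℝ 2 (fun y => u y - v y) y‖ ≤ 1 * A :=
        mul_le_mul hb1 ha2 (norm_nonneg _) zero_le_one
      have t4 : ‖fderiv ℝ (⇑φb) y‖ * ‖fderiv ℝ (fun y => u y - v y) y‖ ≤ Mφ * A :=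
        mul_le_mul (hφf y) ha1 (norm_nonneg _) hMφ0
      have t5 : ‖iteratedFDeriv ℝ 2 (⇑φb) y‖ * |u y - v y| ≤ Mφ * A :=
        mul_le_mul (hφD2 y) ha0 (abs_nonneg _) hMφ0
      constructor
      · refine h1.trans ?_; linarith [mul_nonneg hMφ0 hA0]
      · refine h2.trans ?_; linarith [mul_nonneg hMφ0 hA0]
    · have z0 : (φb y : ℝ) = 0 := hφzero y hy
      have z1 : fderiv ℝ (⇑φb) y = 0 := by
        have := hφDzero 1 y hy
        have h' : ‖fderiv ℝ (⇑φb) y‖ = 0 := by rw [← norm_iFD_one, this, norm_zero]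
        simpa using h'
      have z2 : iteratedFDeriv ℝ 2 (⇑φb) y = 0 := hφDzero 2 y hy
      have hAn : 0 ≤ (1 + 3 * Mφ) * A := by nlinarith
      constructor
      · refine h1.trans ?_
        rw [z0, z1]
        simpa using hAn
      · refine h2.trans ?_
        rw [z0, z1, z2]
        simpa using hAn
  -- the affine-in-bump part q_s
  have hq_eq : ∀ s : ℝ, (fun y : Euc d => s * ((1 - φb y) * B))
      = fun y => s * B + (-(s * B)) • φb y := by
    intro s; funext z; simp only [smul_eq_mul]; ring
  have hCq : ∀ s : ℝ, ContDiff ℝ 2 (fun y : Euc d => s * ((1 - φb y) * B)) := by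
    intro s; rw [hq_eq s]; exact contDiff_const.add (hφsm.const_smul _)
  have hCg : ContDiff ℝ 2 (fun y : Euc d => φb y * (u y - v y)) := hφsm.mul hCw
  have hqD : ∀ s : ℝ, ∀ n : ℕ, n ≠ 0 → (n : WithTop ℕ∞) ≤ 2 → ∀ y : Euc d,
      ‖iteratedFDeriv ℝ n (fun y : Euc d => s * ((1 - φb y) * B)) y‖
        = |s| * B * ‖iteratedFDeriv ℝ n (⇑φb) y‖ := by
    intro s n hn hn2 y
    have hφn : ContDiff ℝ n (⇑φb) := hφsm.of_le hn2
    have hzero : iteratedFDeriv ℝ n (fun _ : Euc d => s * B) = 0 :=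
      iteratedFDeriv_const_of_ne hn _
    rw [hq_eq s, iteratedFDeriv_add_apply' contDiff_const.contDiffAt (hφn.const_smul _).contDiffAt, hzero,
      Pi.zero_apply, zero_add, iteratedFDeriv_const_smul_apply' hφn.contDiffAt, norm_smul,
      Real.norm_eq_abs, abs_neg, abs_mul, abs_of_nonneg hB0]
  have hMφ0 : (0:ℝ) ≤ Mφ := by linarith
  set m : ℝ := (1 + 3 * Mφ) * (A + B) with hmdef
  have hm0 : 0 ≤ m := by nlinarith
  have key : ∀ s : ℝ, |s| ≤ 1 →
      IsC2b (fun y => v y + (φb y * (u y - v y) + s * ((1 - φb y) * B))) ∧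
      C2Norm (fun y => φb y * (u y - v y) + s * ((1 - φb y) * B)) ≤ 3 * m := by
    intro s hs
    have hCf : ContDiff ℝ 2 (fun y : Euc d => φb y * (u y - v y) + s * ((1 - φb y) * B)) :=
      hCg.add (hCq s)
    have hdf : Differentiable ℝ (fun y : Euc d => φb y * (u y - v y) + s * ((1 - φb y) * B)) :=
      hCf.differentiable (by norm_num)
    -- value bound
    have hv0 : ∀ y : Euc d, |φb y * (u y - v y) + s * ((1 - φb y) * B)| ≤ m := by
      intro y
      have h3 := φb.nonneg (x := y); have h4 := φb.le_one (x := y)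
      have h2 : |s * ((1 - φb y) * B)| ≤ B := by
        rw [abs_mul, abs_mul, abs_of_nonneg (by linarith : (0:ℝ) ≤ 1 - φb y),
          abs_of_nonneg hB0]
        calc |s| * ((1 - φb y) * B) ≤ 1 * ((1 - φb y) * B) :=
              mul_le_mul_of_nonneg_right hs (mul_nonneg (by linarith) hB0)
          _ = (1 - φb y) * B := one_mul _
          _ ≤ B := by nlinarith [mul_nonneg h3 hB0]
      have h1 : |φb y * (u y - v y)| ≤ A := by
        by_cases hy : ‖y‖ ≤ R + 1
        · rw [abs_mul, abs_of_nonneg h3]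
          nlinarith [(hAS y hy).1, abs_nonneg (u y - v y)]
        · rw [hφzero y hy]; simpa using hA0
      calc |φb y * (u y - v y) + s * ((1 - φb y) * B)|
          ≤ |φb y * (u y - v y)| + |s * ((1 - φb y) * B)| := abs_add_le _ _
        _ ≤ A + B := add_le_add h1 h2
        _ ≤ m := by nlinarith
    -- gradient bound
    have hqf : ∀ y : Euc d, ‖fderiv ℝ (fun y : Euc d => s * ((1 - φb y) * B)) y‖ ≤ Mφ * B := by
      intro y
      rw [← norm_iFD_one, hqD s 1 one_ne_zero (by norm_num) y]
      nlinarith [mul_le_mul_of_nonneg_left (hφD1 y) hB0,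
        mul_le_mul_of_nonneg_right hs
          (mul_nonneg hB0 (norm_nonneg (iteratedFDeriv ℝ 1 (⇑φb) y)))]
    have hv1 : ∀ y : Euc d,
        ‖fderiv ℝ (fun y : Euc d => φb y * (u y - v y) + s * ((1 - φb y) * B)) y‖ ≤ m := by
      intro y
      rw [fderiv_fun_add (hCg.differentiable (by norm_num) y) ((hCq s).differentiable (by norm_num) y)]
      refine (norm_add_le _ _).trans ?_
      have := (hgD y).1
      have := hqf y
      rw [hmdef]; nlinarith
    -- hessian bound
    have hv2 : ∀ y : Euc d,
        ‖iteratedFDeriv ℝ 2 (fun y : Euc d => φb y * (u y - v y) + s * ((1 - φb y) * B)) y‖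
          ≤ m := by
      intro y
      rw [iteratedFDeriv_add_apply' hCg.contDiffAt (hCq s).contDiffAt]
      refine (norm_add_le _ _).trans ?_
      have h1 := (hgD y).2
      have h2 : ‖iteratedFDeriv ℝ 2 (fun y : Euc d => s * ((1 - φb y) * B)) y‖ ≤ Mφ * B := by
        rw [hqD s 2 two_ne_zero (by norm_num) y]
        nlinarith [mul_le_mul_of_nonneg_left (hφD2 y) hB0,
          mul_le_mul_of_nonneg_right hs
            (mul_nonneg hB0 (norm_nonneg (iteratedFDeriv ℝ 2 (⇑φb) y)))]
      rw [hmdef]; nlinarith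
    constructor
    · refine ⟨hv.1.add hCf, Mv + m, fun y => ⟨?_, ?_, ?_⟩⟩
      · exact (abs_add_le _ _).trans (add_le_add (hMv y).1 (hv0 y))
      · rw [fderiv_fun_add (hdv y) (hdf y)]
        exact (norm_add_le _ _).trans (add_le_add (hMv y).2.1 (hv1 y))
      · rw [iteratedFDeriv_add_apply' hv.1.contDiffAt hCf.contDiffAt]
        exact (norm_add_le _ _).trans (add_le_add (hMv y).2.2 (hv2 y))
    · have hsup : supNorm (fun y : Euc d => φb y * (u y - v y) + s * ((1 - φb y) * B)) ≤ m :=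
        ciSup_le hv0
      have hgr : gradSup (fun y : Euc d => φb y * (u y - v y) + s * ((1 - φb y) * B)) ≤ m :=
        ciSup_le hv1
      have hhe : hessSup (fun y : Euc d => φb y * (u y - v y) + s * ((1 - φb y) * B)) ≤ m :=
        ciSup_le hv2
      unfold C2Norm
      linarith
  -- apply GCP and Lipschitz on both sides
  obtain ⟨hC2p, hNp⟩ := key 1 (by norm_num)
  obtain ⟨hC2m, hNm⟩ := key (-1) (by norm_num)
  have hφx : φb x = 1 := hφone x hx
  have hup : ∀ y, u y ≤ v y + (φb y * (u y - v y) + 1 * ((1 - φb y) * B)) := by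
    intro y
    have h3 := φb.nonneg (x := y); have h4 := φb.le_one (x := y)
    by_cases hy : ‖y‖ ≤ R
    · rw [hφone y hy]; nlinarith
    · have h5 : u y - v y ≤ B := le_trans (le_abs_self _) (hBmem y (not_le.mp hy).le)
      nlinarith [mul_nonneg (by linarith : (0:ℝ) ≤ 1 - φb y)
        (by linarith : (0:ℝ) ≤ B - (u y - v y))]
  have hdown : ∀ y, v y + (φb y * (u y - v y) + (-1) * ((1 - φb y) * B)) ≤ u y := by
    intro y
    have h3 := φb.nonneg (x := y); have h4 := φb.le_one (x := y)
    by_cases hy : ‖y‖ ≤ R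
    · rw [hφone y hy]; nlinarith
    · have h5 : -(u y - v y) ≤ B := le_trans (neg_le_abs _) (hBmem y (not_le.mp hy).le)
      nlinarith [mul_nonneg (by linarith : (0:ℝ) ≤ 1 - φb y)
        (by linarith : (0:ℝ) ≤ B + (u y - v y))]
  have hux : u x = v x + (φb x * (u x - v x) + 1 * ((1 - φb x) * B)) := by
    rw [hφx]; ring
  have hdx : v x + (φb x * (u x - v x) + (-1) * ((1 - φb x) * B)) = u x := by
    rw [hφx]; ring
  have hg1 : I u x ≤ I (fun y => v y + (φb y * (u y - v y) + 1 * ((1 - φb y) * B))) x :=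
    hGCP u _ hu hC2p hup x hux
  have hg2 : I (fun y => v y + (φb y * (u y - v y) + (-1) * ((1 - φb y) * B))) x ≤ I u x :=
    hGCP _ u hC2m hu hdown x hdx
  have hl1 := hLip (fun y => v y + (φb y * (u y - v y) + 1 * ((1 - φb y) * B))) v hC2p hv x
  have hl2 := hLip (fun y => v y + (φb y * (u y - v y) + (-1) * ((1 - φb y) * B))) v hC2m hv x
  have he1 : (fun y => (v y + (φb y * (u y - v y) + 1 * ((1 - φb y) * B))) - v y)
      = fun y => φb y * (u y - v y) + 1 * ((1 - φb y) * B) := by funext z; ring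
  have he2 : (fun y => (v y + (φb y * (u y - v y) + (-1) * ((1 - φb y) * B))) - v y)
      = fun y => φb y * (u y - v y) + (-1) * ((1 - φb y) * B) := by funext z; ring
  rw [he1] at hl1
  rw [he2] at hl2
  have hK1 : K₀ * C2Norm (fun y => φb y * (u y - v y) + 1 * ((1 - φb y) * B)) ≤ K₀ * (3 * m) :=
    mul_le_mul_of_nonneg_left hNp hK₀
  have hK2 : K₀ * C2Norm (fun y => φb y * (u y - v y) + (-1) * ((1 - φb y) * B)) ≤ K₀ * (3 * m) :=
    mul_le_mul_of_nonneg_left hNm hK₀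
  have hup' : I u x - I v x ≤ K₀ * (3 * m) := by
    have := (le_abs_self (I (fun y => v y + (φb y * (u y - v y) + 1 * ((1 - φb y) * B))) x
      - I v x)).trans (hl1.trans hK1)
    linarith
  have hdn' : I v x - I u x ≤ K₀ * (3 * m) := by
    have := (neg_le_abs (I (fun y => v y + (φb y * (u y - v y) + (-1) * ((1 - φb y) * B))) x
      - I v x)).trans (hl2.trans hK2)
    linarith
  have hRHS : 3 * (1 + 3 * Mφ) * K₀ * (A + B) = K₀ * (3 * m) := by rw [hmdef]; ring
  rw [hRHS]
  exact abs_sub_le_iff.mpr ⟨hup', hdn'⟩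

end
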